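/- Let E be a measurable space, 𝒞 = {1,...,C} a finite label set, and (X_0, C_0), (X_1, C_1), ..., (X_n, C_n) i.i.d. random pairs in E × 𝒞. Let s^1, ..., s^K : E × 𝒞 → ℝ be measurable score functions (one per model in the ensemble). For each model k and label c define the per-model conformal p-value p_c^k(X_0) = (1 + #{i ∈ {1,...,n} : s^k(X_0, c) ≤ s^k(X_i, C_i)}) / (n + 1), define the merged p-value p_c(X_0) = K · min_{k=1,...,K} p_c^k(X_0), and for α ∈ (0,1) set Γ(X_0) = {c ∈ 𝒞 : p_c(X_0) > α}. Then Pr(C_0 ∈ Γ(X_0)) ≥ 1 − α. -/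

import Mathlib

open MeasureTheory ProbabilityTheory
open scoped Classical ENNReal

/-- Per-index conformity count: number of indices `j ≠ i` with `g (f i) ≤ g (f j)`. -/
noncomputable def spikecpCount {E' : Type*} (n : ℕ) (g : E' → ℝ) (i : Fin (n + 1))
    (f : Fin (n + 1) → E') : ℕ :=
  (Finset.univ.filter fun j : Fin (n + 1) => j ≠ i ∧ g (f i) ≤ g (f j)).card

lemma spikecpCount_card_le {E' : Type*} (n : ℕ) (g : E' → ℝ) (f : Fin (n + 1) → E')
    (m : ℕ) :
    (Finset.univ.filter fun i : Fin (n + 1) => spikecpCount n g i f + 1 ≤ m).card ≤ m := by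
  by_contra h
  push_neg at h
  set S := Finset.univ.filter fun i : Fin (n + 1) => spikecpCount n g i f + 1 ≤ m with hS
  have hne : S.Nonempty := Finset.card_pos.mp (by omega)
  obtain ⟨i0, hi0S, hmin⟩ := S.exists_min_image (fun i => g (f i)) hne
  have hsub : S.erase i0 ⊆ Finset.univ.filter fun j => j ≠ i0 ∧ g (f i0) ≤ g (f j) := by
    intro j hj
    rw [Finset.mem_erase] at hj
    exact Finset.mem_filter.mpr ⟨Finset.mem_univ _, hj.1, hmin j hj.2⟩
  have hc := Finset.card_le_card hsub
  have hcnt : spikecpCount n g i0 f + 1 ≤ m := (Finset.mem_filter.mp hi0S).2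
  have herase := Finset.card_erase_of_mem hi0S
  unfold spikecpCount at hcnt
  omega

lemma spikecpCount_measurable {E' : Type*} [MeasurableSpace E'] (n : ℕ) (g : E' → ℝ)
    (hg : Measurable g) (i : Fin (n + 1)) :
    Measurable (spikecpCount n g i) := by
  have hrw : spikecpCount n g i = fun f =>
      ∑ j : Fin (n + 1), if j ≠ i ∧ g (f i) ≤ g (f j) then 1 else 0 := by
    funext f
    unfold spikecpCount
    rw [Finset.card_filter]
  rw [hrw]
  refine Finset.measurable_sum _ fun j _ => Measurable.ite ?_ measurable_const measurable_const
  have h1 : MeasurableSet {f : Fin (n + 1) → E' | g (f i) ≤ g (f j)} :=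
    measurableSet_le (hg.comp (measurable_pi_apply i)) (hg.comp (measurable_pi_apply j))
  have h2 : {f : Fin (n + 1) → E' | j ≠ i ∧ g (f i) ≤ g (f j)} =
      {_f : Fin (n + 1) → E' | j ≠ i} ∩ {f | g (f i) ≤ g (f j)} := rfl
  rw [h2]
  exact (MeasurableSet.const _).inter h1

/-- Key single-model conformal bound under the product (i.i.d.) measure. -/
lemma spikecp_key {E' : Type*} [MeasurableSpace E'] (ν : Measure E')
    [IsProbabilityMeasure ν] (n : ℕ) (g : E' → ℝ) (hg : Measurable g) (m : ℕ) :
    ((n : ℝ≥0∞) + 1) *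
      Measure.pi (fun _ : Fin (n + 1) => ν) {f | spikecpCount n g 0 f + 1 ≤ m}
      ≤ (m : ℝ≥0∞) := by
  set P : Measure (Fin (n + 1) → E') := Measure.pi (fun _ : Fin (n + 1) => ν) with hP
  set A : Fin (n + 1) → Set (Fin (n + 1) → E') :=
    fun i => {f | spikecpCount n g i f + 1 ≤ m} with hA
  have hA_meas : ∀ i, MeasurableSet (A i) := by
    intro i
    have : A i = (spikecpCount n g i) ⁻¹' {x : ℕ | x + 1 ≤ m} := rfl
    rw [this]
    exact (spikecpCount_measurable n g hg i) (MeasurableSet.of_discrete)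
  -- exchangeability: swapping 0 and i preserves P and maps A i to A 0
  have hswap : ∀ i, P (A i) = P (A 0) := by
    intro i
    set σ := Equiv.swap (0 : Fin (n + 1)) i with hσ
    have hMP := MeasureTheory.measurePreserving_piCongrLeft (fun _ : Fin (n + 1) => ν) σ
    set e := MeasurableEquiv.piCongrLeft (fun _ : Fin (n + 1) => E') σ with he
    have heval : ∀ (f : Fin (n + 1) → E') (j : Fin (n + 1)), e f (σ j) = f j := by
      intro f j
      rw [he]
      exact MeasurableEquiv.piCongrLeft_apply_apply (β := fun _ : Fin (n + 1) => E') σ f j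
    have hpre : e ⁻¹' (A i) = A 0 := by
      ext f
      simp only [Set.mem_preimage, hA, Set.mem_setOf_eq]
      have hcount : spikecpCount n g i (e f) = spikecpCount n g 0 f := by
        unfold spikecpCount
        refine (Finset.card_equiv σ fun j => ?_).symm
        simp only [Finset.mem_filter, Finset.mem_univ, true_and]
        have h0 : σ j = i ↔ j = 0 := by
          constructor
          · intro hji
            have hji' : σ j = σ 0 := by rw [hji, hσ, Equiv.swap_apply_left]
            exact σ.injective hji'
          · intro hj0
            rw [hj0, hσ]
            exact Equiv.swap_apply_left 0 i
        have h1 : σ j ≠ i ↔ j ≠ 0 := not_congr h0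
        have h2 : e f i = f 0 := by
          have := heval f 0
          rwa [show σ 0 = i from Equiv.swap_apply_left 0 i] at this
        have h3 : e f (σ j) = f j := heval f j
        rw [h1, h2, h3]
      rw [hcount]
    calc P (A i) = (Measure.map e P) (A i) := by rw [hMP.map_eq]
      _ = P (e ⁻¹' (A i)) := MeasurableEquiv.map_apply e (A i)
      _ = P (A 0) := by rw [hpre]
  -- sum of indicators bounded by m pointwise
  have hsum : ∑ i : Fin (n + 1), P (A i) ≤ (m : ℝ≥0∞) := by
    have hpt : ∀ f, ∑ i : Fin (n + 1), (A i).indicator (fun _ => (1 : ℝ≥0∞)) f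
        ≤ (m : ℝ≥0∞) := by
      intro f
      have hcard : ∑ i : Fin (n + 1), (A i).indicator (fun _ => (1 : ℝ≥0∞)) f
          = ((Finset.univ.filter fun i : Fin (n + 1) =>
              spikecpCount n g i f + 1 ≤ m).card : ℝ≥0∞) := by
        rw [Finset.card_filter]
        push_cast
        refine Finset.sum_congr rfl fun i _ => ?_
        by_cases h : spikecpCount n g i f + 1 ≤ m <;>
          simp [hA, Set.indicator, h] <;> omega
      rw [hcard]
      exact_mod_cast Nat.cast_le.mpr (spikecpCount_card_le n g f m)
    calc ∑ i : Fin (n + 1), P (A i)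
        = ∑ i : Fin (n + 1), ∫⁻ f, (A i).indicator (fun _ => (1 : ℝ≥0∞)) f ∂P := by
          refine Finset.sum_congr rfl fun i _ => ?_
          exact (lintegral_indicator_one (hA_meas i)).symm
      _ = ∫⁻ f, ∑ i : Fin (n + 1), (A i).indicator (fun _ => (1 : ℝ≥0∞)) f ∂P :=
          (lintegral_finset_sum _ fun i _ =>
            (measurable_const.indicator (hA_meas i))).symm
      _ ≤ ∫⁻ _f, (m : ℝ≥0∞) ∂P := lintegral_mono hpt
      _ = (m : ℝ≥0∞) := by simp
  calc ((n : ℝ≥0∞) + 1) * P (A 0) = ∑ _i : Fin (n + 1), P (A 0) := by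
        rw [Finset.sum_const, Finset.card_univ, Fintype.card_fin, nsmul_eq_mul]
        push_cast
        ring
    _ = ∑ i : Fin (n + 1), P (A i) := Finset.sum_congr rfl fun i _ => (hswap i).symm
    _ ≤ (m : ℝ≥0∞) := hsum

/-- Let `Z i = (X i, C i)`, `i = 0, ..., n`, be i.i.d. random pairs in
`E × 𝒞` with `𝒞 = Fin C`, and let `s 1, ..., s K : E × 𝒞 → ℝ` be measurable score
functions (one per ensemble model). For each model `k` and label `c` define the per-model
conformal p-value `p_c^k(X 0) = (1 + #{i ∈ {1,...,n} : s k (X 0, c) ≤ s k (X i, C i)})/(n+1)`,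
the merged p-value `p_c(X 0) = K ⬝ min_k p_c^k(X 0)`, and for `α ∈ (0,1)` the set
`Γ(X 0) = {c : p_c(X 0) > α}`. Then `Pr(C 0 ∈ Γ(X 0)) ≥ 1 − α`. -/
theorem ensemble_spikecp_pm_coverage
    {Ω E : Type*} [MeasurableSpace Ω] [MeasurableSpace E]
    (μ : Measure Ω) [IsProbabilityMeasure μ]
    (n C : ℕ) (hC : 0 < C)
    (Z : Fin (n + 1) → Ω → E × Fin C)
    (hmeas : ∀ i, Measurable (Z i))
    (hindep : iIndepFun Z μ)
    (hident : ∀ i, IdentDistrib (Z i) (Z 0) μ μ)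
    (K : ℕ) (hK : 0 < K)
    (s : Fin K → E × Fin C → ℝ) (hs : ∀ k, Measurable (s k))
    (α : ℝ) (hα : α ∈ Set.Ioo (0 : ℝ) 1) :
    ENNReal.ofReal (1 - α) ≤
      μ {ω | (Z 0 ω).2 ∈ {c : Fin C |
        α < (K : ℝ) * ⨅ k : Fin K,
          (1 + ((Finset.univ.filter
              fun i : Fin (n + 1) => i ≠ 0 ∧ s k ((Z 0 ω).1, c) ≤ s k (Z i ω)).card : ℝ))
            / ((n : ℝ) + 1)}} := by
  obtain ⟨hα0, hα1⟩ := hα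
  have hKR : (0 : ℝ) < K := by exact_mod_cast hK
  have hn1 : (0 : ℝ) < (n : ℝ) + 1 := by positivity
  have hαK : (0 : ℝ) ≤ α / K := by positivity
  haveI : Nonempty (Fin K) := ⟨⟨0, hK⟩⟩
  set ν : Measure (E × Fin C) := μ.map (Z 0) with hν
  haveI hνprob : IsProbabilityMeasure ν := Measure.isProbabilityMeasure_map (hmeas 0).aemeasurable
  set W : Ω → (Fin (n + 1) → E × Fin C) := fun ω i => Z i ω with hWdef
  have hW : Measurable W := measurable_pi_lambda _ hmeas
  set P : Measure (Fin (n + 1) → E × Fin C) := Measure.pi (fun _ => ν) with hPdef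
  -- joint law is the product measure
  have hmap : P = μ.map W := by
    refine Measure.pi_eq fun sets hsets => ?_
    rw [Measure.map_apply hW (MeasurableSet.univ_pi hsets)]
    have hpre : W ⁻¹' Set.pi Set.univ sets = ⋂ i ∈ Finset.univ, Z i ⁻¹' sets i := by
      ext ω
      simp [hWdef, Set.mem_pi]
    rw [hpre, hindep.measure_inter_preimage_eq_mul Finset.univ (fun i _ => hsets i)]
    refine Finset.prod_congr rfl fun i _ => ?_
    rw [← Measure.map_apply (hmeas i) (hsets i), (hident i).map_eq]
  set m : ℕ := Nat.floor ((α / K) * ((n : ℝ) + 1)) with hm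
  set B : Fin K → Set (Fin (n + 1) → E × Fin C) :=
    fun k => {f | spikecpCount n (s k) 0 f + 1 ≤ m} with hB
  have hB_meas : ∀ k, MeasurableSet (B k) := by
    intro k
    have : B k = (spikecpCount n (s k) 0) ⁻¹' {x : ℕ | x + 1 ≤ m} := rfl
    rw [this]
    exact (spikecpCount_measurable n (s k) (hs k) 0) (MeasurableSet.of_discrete)
  -- per-model p-value bound
  have hBk : ∀ k, P (B k) ≤ ENNReal.ofReal (α / K) := by
    intro k
    have hkey := spikecp_key ν n (s k) (hs k) m
    have hm_le : (m : ℝ≥0∞) ≤ ((n : ℝ≥0∞) + 1) * ENNReal.ofReal (α / K) := by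
      have hfl : (m : ℝ) ≤ (α / K) * ((n : ℝ) + 1) := Nat.floor_le (by positivity)
      calc (m : ℝ≥0∞) = ENNReal.ofReal (m : ℝ) := by simp
        _ ≤ ENNReal.ofReal ((α / K) * ((n : ℝ) + 1)) := ENNReal.ofReal_le_ofReal hfl
        _ = ENNReal.ofReal (α / K) * ENNReal.ofReal ((n : ℝ) + 1) := ENNReal.ofReal_mul hαK
        _ = ((n : ℝ≥0∞) + 1) * ENNReal.ofReal (α / K) := by
            rw [mul_comm]
            congr 1
            rw [ENNReal.ofReal_add (by positivity) zero_le_one]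
            simp
    have hfin := hkey.trans hm_le
    have hne : ((n : ℝ≥0∞) + 1) ≠ 0 :=
      (lt_of_lt_of_le zero_lt_one le_add_self).ne'
    have htop : ((n : ℝ≥0∞) + 1) ≠ ⊤ :=
      ENNReal.add_ne_top.mpr ⟨ENNReal.natCast_ne_top n, ENNReal.one_ne_top⟩
    exact (ENNReal.mul_le_mul_iff_right hne htop).mp hfin
  -- identify the coverage event
  have hGset : {ω | (Z 0 ω).2 ∈ {c : Fin C |
        α < (K : ℝ) * ⨅ k : Fin K,
          (1 + ((Finset.univ.filter
              fun i : Fin (n + 1) => i ≠ 0 ∧ s k ((Z 0 ω).1, c) ≤ s k (Z i ω)).card : ℝ))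
            / ((n : ℝ) + 1)}} = ⋂ k : Fin K, (W ⁻¹' (B k))ᶜ := by
    ext ω
    simp only [Set.mem_setOf_eq, Set.mem_iInter, Set.mem_compl_iff, Set.mem_preimage, hB,
      Prod.mk.eta]
    have hcard : ∀ k : Fin K,
        ((Finset.univ.filter
            fun i : Fin (n + 1) => i ≠ 0 ∧ s k (Z 0 ω) ≤ s k (Z i ω)).card : ℝ)
          = (spikecpCount n (s k) 0 (W ω) : ℝ) := by
      intro k
      simp [spikecpCount, hWdef]
    have hval : ∀ N : ℕ,
        (α < (K : ℝ) * ((1 + (N : ℝ)) / ((n : ℝ) + 1))) ↔ ¬ (N + 1 ≤ m) := by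
      intro N
      rw [← div_lt_iff₀' hKR, lt_div_iff₀ hn1, hm, Nat.le_floor_iff (by positivity), not_le]
      push_cast
      constructor <;> intro h <;> linarith
    constructor
    · intro h k
      have hle : (⨅ k : Fin K, (1 + ((Finset.univ.filter
              fun i : Fin (n + 1) => i ≠ 0 ∧ s k (Z 0 ω) ≤ s k (Z i ω)).card : ℝ))
            / ((n : ℝ) + 1)) ≤ (1 + ((Finset.univ.filter
              fun i : Fin (n + 1) => i ≠ 0 ∧ s k (Z 0 ω) ≤ s k (Z i ω)).card : ℝ))
            / ((n : ℝ) + 1) :=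
        ciInf_le (Set.Finite.bddBelow (Set.finite_range _)) k
      have hk : α < (K : ℝ) * ((1 + ((Finset.univ.filter
              fun i : Fin (n + 1) => i ≠ 0 ∧ s k (Z 0 ω) ≤ s k (Z i ω)).card : ℝ))
            / ((n : ℝ) + 1)) :=
        h.trans_le (mul_le_mul_of_nonneg_left hle hKR.le)
      rw [hcard k] at hk
      exact (hval _).mp hk
    · intro h
      have hbound : ∀ k : Fin K, α < (K : ℝ) * ((1 + ((Finset.univ.filter
              fun i : Fin (n + 1) => i ≠ 0 ∧ s k (Z 0 ω) ≤ s k (Z i ω)).card : ℝ))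
            / ((n : ℝ) + 1)) := by
        intro k
        rw [hcard k]
        exact (hval _).mpr (h k)
      obtain ⟨k0, _, hmin⟩ := Finset.exists_min_image Finset.univ
        (fun k : Fin K => (1 + ((Finset.univ.filter
              fun i : Fin (n + 1) => i ≠ 0 ∧ s k (Z 0 ω) ≤ s k (Z i ω)).card : ℝ))
            / ((n : ℝ) + 1)) ⟨Classical.arbitrary _, Finset.mem_univ _⟩
      have hinf : (1 + ((Finset.univ.filter
              fun i : Fin (n + 1) => i ≠ 0 ∧ s k0 (Z 0 ω) ≤ s k0 (Z i ω)).card : ℝ))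
            / ((n : ℝ) + 1) ≤ ⨅ k : Fin K, (1 + ((Finset.univ.filter
              fun i : Fin (n + 1) => i ≠ 0 ∧ s k (Z 0 ω) ≤ s k (Z i ω)).card : ℝ))
            / ((n : ℝ) + 1) :=
        le_ciInf fun k => hmin k (Finset.mem_univ _)
      exact (hbound k0).trans_le (mul_le_mul_of_nonneg_left hinf hKR.le)
  rw [hGset]
  have hGmeas : MeasurableSet (⋂ k : Fin K, (W ⁻¹' (B k))ᶜ) :=
    MeasurableSet.iInter fun k => (hW (hB_meas k)).compl
  have hbad : μ ((⋂ k : Fin K, (W ⁻¹' (B k))ᶜ)ᶜ) ≤ ENNReal.ofReal α := by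
    have hcompl : (⋂ k : Fin K, (W ⁻¹' (B k))ᶜ)ᶜ = ⋃ k : Fin K, W ⁻¹' (B k) := by
      simp
    rw [hcompl]
    calc μ (⋃ k : Fin K, W ⁻¹' (B k)) ≤ ∑' k : Fin K, μ (W ⁻¹' (B k)) := measure_iUnion_le _
      _ = ∑ k : Fin K, μ (W ⁻¹' (B k)) := tsum_fintype _
      _ = ∑ k : Fin K, P (B k) := by
          refine Finset.sum_congr rfl fun k _ => ?_
          rw [hmap, Measure.map_apply hW (hB_meas k)]
      _ ≤ ∑ _k : Fin K, ENNReal.ofReal (α / K) := Finset.sum_le_sum fun k _ => hBk k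
      _ = (K : ℝ≥0∞) * ENNReal.ofReal (α / K) := by
          rw [Finset.sum_const, Finset.card_univ, Fintype.card_fin, nsmul_eq_mul]
      _ = ENNReal.ofReal α := by
          rw [← ENNReal.ofReal_natCast K, ← ENNReal.ofReal_mul (by positivity)]
          congr 1
          field_simp
  calc ENNReal.ofReal (1 - α) = 1 - ENNReal.ofReal α := by
        rw [ENNReal.ofReal_sub _ hα0.le]
        simp
    _ ≤ 1 - μ ((⋂ k : Fin K, (W ⁻¹' (B k))ᶜ)ᶜ) := tsub_le_tsub_left hbad 1
    _ = μ (⋂ k : Fin K, (W ⁻¹' (B k))ᶜ) := by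
        rw [← prob_compl_eq_one_sub hGmeas.compl, compl_compl]
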